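/- Let n ≥ 2 be a natural number, p ∈ [0,1], and let λ be a real number with 0 ≤ λ < 1/(n−1) (so that 1 − λ·((n−2)·p + 1) > 0). For d ∈ {0, 1, …, n−1} define a(d) = 1 + λ·d/(1 − λ·((n−2)·p + 1)). Then a satisfies the system of interim best responses under Erdos–Renyi link formation with parameter p: for every d ∈ {0,1,…,n−1}, a(d) = 1 + λ·d·∑_{d'=1}^{n−1} C(n−2, d'−1)·p^(d'−1)·(1−p)^(n−1−d')·a(d'). (Hence the Bayesian–Nash equilibrium action of an agent of degree d equals 1 + λd/(1 − λ((n−2)p+1)).) -/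

import Mathlib

/-- Under Erdos–Renyi link formation with parameter `p ∈ [0,1]` and
`0 ≤ λ < 1/(n-1)`, the profile `a(d) = 1 + λd/(1 - λ((n-2)p + 1))` satisfies the
interim best-response system
`a(d) = 1 + λ·d·∑_{d'=1}^{n-1} C(n-2,d'-1)·p^(d'-1)·(1-p)^(n-1-d')·a(d')`
for every `d ∈ {0, …, n-1}`. -/
theorem stmt_14 (n : ℕ) (hn : 2 ≤ n)
    (p : ℝ) (hp0 : 0 ≤ p) (hp1 : p ≤ 1)
    (lam : ℝ) (hlam0 : 0 ≤ lam) (hlam1 : lam < 1 / ((n : ℝ) - 1))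
    (a : ℕ → ℝ)
    (ha : ∀ d, a d = 1 + lam * (d : ℝ) / (1 - lam * (((n : ℝ) - 2) * p + 1))) :
    ∀ d ∈ Finset.range n,
      a d = 1 + lam * (d : ℝ) *
        ∑ d' ∈ Finset.Icc 1 (n - 1),
          ((n - 2).choose (d' - 1) : ℝ) * p ^ (d' - 1) * (1 - p) ^ (n - 1 - d') * a d' := by
  set m := n - 2 with hm
  have hnm : (m : ℝ) = (n : ℝ) - 2 := by
    have : (m : ℕ) + 2 = n := Nat.sub_add_cancel hn
    push_cast [← this]; ring
  set D : ℝ := 1 - lam * (((n : ℝ) - 2) * p + 1) with hD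
  have hn1 : (0 : ℝ) < (n : ℝ) - 1 := by
    have : (2 : ℝ) ≤ (n : ℝ) := by exact_mod_cast hn
    linarith
  have hDpos : 0 < D := by
    have hb : ((n : ℝ) - 2) * p + 1 ≤ (n : ℝ) - 1 := by nlinarith
    have hb0 : 0 ≤ ((n : ℝ) - 2) * p + 1 := by nlinarith
    have : lam * (((n : ℝ) - 2) * p + 1) ≤ lam * ((n : ℝ) - 1) :=
      mul_le_mul_of_nonneg_left hb hlam0
    have h2 : lam * ((n : ℝ) - 1) < 1 := (lt_div_iff₀ hn1).mp hlam1
    simp only [hD]; linarith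
  have hDne : D ≠ 0 := ne_of_gt hDpos
  -- Bernstein sums evaluated at p
  have hS0 : ∑ i ∈ Finset.range (m + 1), (m.choose i : ℝ) * p ^ i * (1 - p) ^ (m - i) = 1 := by
    have := congrArg (Polynomial.eval p) (bernsteinPolynomial.sum ℝ m)
    simpa [bernsteinPolynomial, Finset.sum_apply, Polynomial.eval_finset_sum] using this
  have hS1 : ∑ i ∈ Finset.range (m + 1), (i : ℝ) * ((m.choose i : ℝ) * p ^ i * (1 - p) ^ (m - i))
      = (m : ℝ) * p := by
    have := congrArg (Polynomial.eval p) (bernsteinPolynomial.sum_smul ℝ m)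
    simpa [bernsteinPolynomial, Polynomial.eval_finset_sum, mul_assoc] using this
  -- rewrite the Icc sum
  have hIcc : ∑ d' ∈ Finset.Icc 1 (n - 1),
        ((n - 2).choose (d' - 1) : ℝ) * p ^ (d' - 1) * (1 - p) ^ (n - 1 - d') * a d'
      = ∑ i ∈ Finset.range (m + 1),
        (m.choose i : ℝ) * p ^ i * (1 - p) ^ (m - i) * a (i + 1) := by
    have hIco : Finset.Icc 1 (n - 1) = Finset.Ico 1 n := by
      ext x; simp; omega
    rw [hIco, Finset.sum_Ico_eq_sum_range]
    have hcard : n - 1 = m + 1 := by omega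
    rw [hcard]
    apply Finset.sum_congr rfl
    intro i hi
    simp only [Finset.mem_range] at hi
    have h1 : 1 + i - 1 = i := by omega
    have h2 : m + 1 - (1 + i) = m - i := by omega
    rw [h1, h2, add_comm 1 i]
  have hsum : ∑ d' ∈ Finset.Icc 1 (n - 1),
        ((n - 2).choose (d' - 1) : ℝ) * p ^ (d' - 1) * (1 - p) ^ (n - 1 - d') * a d'
      = 1 + lam * (((n : ℝ) - 2) * p + 1) / D := by
    rw [hIcc]
    have : ∀ i ∈ Finset.range (m + 1),
        (m.choose i : ℝ) * p ^ i * (1 - p) ^ (m - i) * a (i + 1)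
        = (m.choose i : ℝ) * p ^ i * (1 - p) ^ (m - i)
          + (lam / D) * ((i : ℝ) * ((m.choose i : ℝ) * p ^ i * (1 - p) ^ (m - i)))
          + (lam / D) * ((m.choose i : ℝ) * p ^ i * (1 - p) ^ (m - i)) := by
      intro i _
      rw [ha (i + 1)]
      push_cast
      field_simp
      ring
    rw [Finset.sum_congr rfl this]
    rw [Finset.sum_add_distrib, Finset.sum_add_distrib, ← Finset.mul_sum, ← Finset.mul_sum,
      hS0, hS1, hnm]
    field_simp
    ring
  intro d _
  rw [hsum, ha d]
  field_simp
  ring
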